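/- For a positive integer k, define J_n = ∫_{[0,1]^k} ⟨x_1⋯x_k⟩_n dx_1⋯dx_k where ⟨x⟩_n = x(x+1)⋯(x+n−1). Then for all n ≥ 1, J_n^2 − J_{n−1} J_{n+1} ≤ −J_{n−1} · ∫_{[0,1]^k} (x_1⋯x_k) ⟨x_1⋯x_k⟩_n dx_1⋯dx_k ≤ 0; in particular J_{n+1} ≥ J_n · J_n / J_{n−1}. -/

import Mathlib

open MeasureTheory

/-- Integral of `f (x₁ ⋯ x_k)` over the unit cube `[0,1]^k`. -/
noncomputable def cubeInt (k : ℕ) (f : ℝ → ℝ) : ℝ :=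
  ∫ x : Fin k → ℝ in Set.univ.pi fun _ => Set.Icc (0:ℝ) 1, f (∏ i, x i)

section aux

variable (k : ℕ)

lemma cube_compact : IsCompact (Set.univ.pi fun _ : Fin k => Set.Icc (0:ℝ) 1) :=
  isCompact_univ_pi fun _ => isCompact_Icc

lemma cube_meas : MeasurableSet (Set.univ.pi fun _ : Fin k => Set.Icc (0:ℝ) 1) :=
  MeasurableSet.univ_pi fun _ => measurableSet_Icc

lemma prod_mem_cube {x : Fin k → ℝ}
    (hx : x ∈ Set.univ.pi fun _ : Fin k => Set.Icc (0:ℝ) 1) :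
    (∏ i, x i) ∈ Set.Icc (0:ℝ) 1 := by
  constructor
  · exact Finset.prod_nonneg fun i _ => (hx i trivial).1
  · exact Finset.prod_le_one (fun i _ => (hx i trivial).1) (fun i _ => (hx i trivial).2)

lemma contProd : Continuous fun x : Fin k → ℝ => ∏ i, x i :=
  continuous_finset_prod _ fun i _ => continuous_apply i

lemma cube_integrable {f : ℝ → ℝ} (hf : Continuous f) :
    IntegrableOn (fun x : Fin k → ℝ => f (∏ i, x i))
      (Set.univ.pi fun _ : Fin k => Set.Icc (0:ℝ) 1) :=
  ((hf.comp (contProd k)).continuousOn).integrableOn_compact (cube_compact k)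

lemma cubeInt_mono {f g : ℝ → ℝ} (hf : Continuous f) (hg : Continuous g)
    (h : ∀ p ∈ Set.Icc (0:ℝ) 1, f p ≤ g p) : cubeInt k f ≤ cubeInt k g :=
  setIntegral_mono_on (cube_integrable k hf) (cube_integrable k hg) (cube_meas k)
    fun x hx => h _ (prod_mem_cube k hx)

lemma cubeInt_nonneg {f : ℝ → ℝ} (h : ∀ p ∈ Set.Icc (0:ℝ) 1, 0 ≤ f p) :
    0 ≤ cubeInt k f :=
  setIntegral_nonneg (cube_meas k) fun x hx => h _ (prod_mem_cube k hx)

lemma cubeInt_add {f g : ℝ → ℝ} (hf : Continuous f) (hg : Continuous g) :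
    cubeInt k (fun p => f p + g p) = cubeInt k f + cubeInt k g :=
  integral_add (cube_integrable k hf) (cube_integrable k hg)

lemma contF (n : ℕ) : Continuous fun p : ℝ => ∏ i ∈ Finset.range n, (p + i) :=
  continuous_finset_prod _ fun i _ => by continuity

end aux

/-- For `J n = ∫_{[0,1]^k} ⟨p⟩_n` and `n ≥ 1`:
`J n ^2 − J (n−1) J (n+1) ≤ − J (n−1) ∫ p⟨p⟩_n ≤ 0`, and in particular
`J n * J n / J (n−1) ≤ J (n+1)`. -/
theorem stmt_18 (k : ℕ) (hk : 0 < k)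
    (J : ℕ → ℝ)
    (hJ : ∀ n, J n = cubeInt k fun p => ∏ i ∈ Finset.range n, (p + i)) :
    ∀ n : ℕ, 1 ≤ n →
      J n ^ 2 - J (n - 1) * J (n + 1) ≤
          -(J (n - 1) * cubeInt k fun p => p * ∏ i ∈ Finset.range n, (p + i)) ∧
        -(J (n - 1) * cubeInt k fun p => p * ∏ i ∈ Finset.range n, (p + i)) ≤ 0 ∧
          J n * J n / J (n - 1) ≤ J (n + 1) := by
  -- basic facts
  have hFnn : ∀ n : ℕ, ∀ p ∈ Set.Icc (0:ℝ) 1, 0 ≤ ∏ i ∈ Finset.range n, (p + i) := by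
    intro n p hp
    exact Finset.prod_nonneg fun i _ => by have := hp.1; positivity
  have hJnn : ∀ n, 0 ≤ J n := fun n => by
    rw [hJ n]; exact cubeInt_nonneg k (hFnn n)
  have contG : ∀ n : ℕ, Continuous fun p : ℝ => p * ∏ i ∈ Finset.range n, (p + i) :=
    fun n => continuous_id.mul (contF n)
  have hGnn : ∀ n : ℕ, 0 ≤ cubeInt k fun p => p * ∏ i ∈ Finset.range n, (p + i) := by
    intro n
    exact cubeInt_nonneg k fun p hp => mul_nonneg hp.1 (hFnn n p hp)
  -- J (n+1) = cubeInt G n + n * J n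
  have hsucc : ∀ n : ℕ,
      J (n + 1) = (cubeInt k fun p => p * ∏ i ∈ Finset.range n, (p + i)) + n * J n := by
    intro n
    rw [hJ (n + 1), hJ n]
    have : (cubeInt k fun p => ∏ i ∈ Finset.range (n+1), (p + i)) =
        cubeInt k fun p => (p * ∏ i ∈ Finset.range n, (p + i)) +
          (n : ℝ) * ∏ i ∈ Finset.range n, (p + i) := by
      congr 1; funext p
      rw [Finset.prod_range_succ]; ring
    rw [this, cubeInt_add k (g := fun p => (n : ℝ) * ∏ i ∈ Finset.range n, (p + i)) (contG n) (Continuous.mul continuous_const (contF n))]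
    congr 1
    have : (cubeInt k fun p => (n : ℝ) * ∏ i ∈ Finset.range n, (p + i)) =
        ∫ x : Fin k → ℝ in Set.univ.pi fun _ => Set.Icc (0:ℝ) 1,
          (n : ℝ) * ∏ i ∈ Finset.range n, ((∏ j, x j) + i) := rfl
    rw [this, integral_const_mul]
    rfl
  intro n hn
  obtain ⟨m, rfl⟩ := Nat.exists_eq_add_of_le hn
  have hm1 : 1 + m - 1 = m := by omega
  rw [hm1]
  -- key: J (m+1) ≤ (m+1) * J m
  have hkey : J (1 + m) ≤ (m + 1 : ℝ) * J m := by
    rw [show 1 + m = m + 1 by omega, hsucc m]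
    have h1 : (cubeInt k fun p => p * ∏ i ∈ Finset.range m, (p + i)) ≤ J m := by
      rw [hJ m]
      exact cubeInt_mono k (contG m) (contF m) fun p hp => by
        nlinarith [hFnn m p hp, hp.1, hp.2]
    nlinarith [hJnn m]
  have hs := hsucc (1 + m)
  have hG := hGnn (1 + m)
  have hJm := hJnn m
  have hJ1m := hJnn (1 + m)
  refine ⟨?_, ?_, ?_⟩
  · rw [hs]
    have : J (1 + m) ^ 2 ≤ ((1 + m : ℕ) : ℝ) * J (1 + m) * J m := by
      push_cast
      nlinarith [hJ1m]
    nlinarith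
  · exact neg_nonpos.mpr (mul_nonneg hJm hG)
  · have hsq : J (1 + m) ^ 2 ≤ J m * J (1 + m + 1) := by
      rw [hs]
      push_cast
      nlinarith [hJ1m, mul_nonneg hJm hG]
    rcases eq_or_lt_of_le hJm with h | h
    · rw [← h, div_zero]
      exact hJnn (1 + m + 1)
    · rw [div_le_iff₀ h]
      nlinarith [hsq]
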